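/- Let 𝔭 ∈ ℤ[x_1,…,x_n] be an integral polynomial and let q, q_1, …, q_n ≥ 1 be integers with least common multiple L = lcm(q, q_1, …, q_n). For a ∈ ℤ and 𝐚 = (a_1,…,a_n) ∈ ℤ^n define F(a,q,𝐚,𝐪) = L^{−n} ∑_{s ∈ {0,…,L−1}^n} e( 𝔭(s)·a/q + ∑_{i=1}^n s_i a_i/q_i ). If there exists an index i with q_i ∤ q, then F(a,q,𝐚,𝐪) = 0 for every a with gcd(a,q) = 1 and every 𝐚 with gcd(a_i, q_i) = 1 for all i. -/

import Mathlib

open scoped BigOperators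

noncomputable section

/-- `e(t) = e^{2πit}`. -/
def e2pi (t : ℝ) : ℂ := Complex.exp (2 * Real.pi * Complex.I * t)

lemma e2pi_add (x y : ℝ) : e2pi (x + y) = e2pi x * e2pi y := by
  simp [e2pi, ← Complex.exp_add, mul_add]

lemma e2pi_intCast (m : ℤ) : e2pi (m : ℝ) = 1 := by
  have := Complex.exp_int_mul_two_pi_mul_I m
  rw [e2pi]
  convert this using 2
  push_cast
  ring

lemma e2pi_eq_one_iff (t : ℝ) : e2pi t = 1 ↔ ∃ m : ℤ, t = (m : ℝ) := by
  constructor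
  · intro h
    rw [e2pi, Complex.exp_eq_one_iff] at h
    obtain ⟨m, hm⟩ := h
    refine ⟨m, ?_⟩
    have h2 : (2 * (Real.pi : ℂ) * Complex.I) ≠ 0 := by
      simp [Real.pi_ne_zero, Complex.I_ne_zero]
    have : (t : ℂ) = (m : ℂ) := by
      apply mul_left_cancel₀ h2
      rw [mul_comm ((m:ℂ)) _] at hm
      exact hm
    exact_mod_cast this
  · rintro ⟨m, rfl⟩
    exact e2pi_intCast m

lemma eval_modeq {n : ℕ} (P : MvPolynomial (Fin n) ℤ) (m : ℕ) (u v : Fin n → ℤ)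
    (h : ∀ j, u j ≡ v j [ZMOD (m : ℤ)]) :
    MvPolynomial.eval u P ≡ MvPolynomial.eval v P [ZMOD (m : ℤ)] := by
  rw [← ZMod.intCast_eq_intCast_iff]
  have hcast : ∀ (w : Fin n → ℤ), ((MvPolynomial.eval w P : ℤ) : ZMod m)
      = MvPolynomial.eval₂ (Int.castRingHom (ZMod m))
          (fun j => ((w j : ℤ) : ZMod m)) P := by
    intro w
    rw [← MvPolynomial.eval₂_id]
    have := MvPolynomial.eval₂_comp_left (Int.castRingHom (ZMod m)) (RingHom.id ℤ) w P
    simpa [Function.comp_def] using this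
  rw [hcast u, hcast v]
  congr 1
  funext j
  exact (ZMod.intCast_eq_intCast_iff _ _ _).mpr (h j)

theorem stmt6 (n : ℕ) (hn : 1 ≤ n) (P : MvPolynomial (Fin n) ℤ)
    (q : ℕ) (hq : 1 ≤ q) (qv : Fin n → ℕ) (hqv : ∀ i, 1 ≤ qv i)
    (L : ℕ) (hL : L = Nat.lcm q (Finset.univ.lcm qv))
    (a : ℤ) (av : Fin n → ℤ)
    (hndvd : ∃ i, ¬ (qv i ∣ q))
    (ha : Int.gcd a (q : ℤ) = 1)
    (hav : ∀ i, Int.gcd (av i) ((qv i : ℤ)) = 1) :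
    ((L : ℂ) ^ n)⁻¹ *
      ∑ s : Fin n → Fin L,
        e2pi (((MvPolynomial.eval (fun i => ((s i : ℕ) : ℤ)) P : ℤ) : ℝ) * (a : ℝ) / (q : ℝ)
          + ∑ i, ((s i : ℕ) : ℝ) * ((av i : ℤ) : ℝ) / ((qv i : ℕ) : ℝ)) = 0 := by
  obtain ⟨i, hi⟩ := hndvd
  have hM0 : Finset.univ.lcm qv ≠ 0 := by
    intro h0
    rw [Finset.lcm_eq_zero_iff] at h0
    obtain ⟨j, -, hj⟩ := h0
    exact absurd hj.symm (by have := hqv j; omega)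
  have hL0 : L ≠ 0 := by
    rw [hL]; exact Nat.lcm_ne_zero (by omega) hM0
  haveI : NeZero L := ⟨hL0⟩
  have hqL : q ∣ L := hL ▸ Nat.dvd_lcm_left _ _
  have hqiL : qv i ∣ L :=
    hL ▸ dvd_trans (Finset.dvd_lcm (Finset.mem_univ i)) (Nat.dvd_lcm_right _ _)
  have hqltL : q < L := by
    rcases lt_or_eq_of_le (Nat.le_of_dvd (Nat.pos_of_ne_zero hL0) hqL) with h | h
    · exact h
    · exact absurd (h ▸ hqiL) hi
  have hq0R : (q : ℝ) ≠ 0 := by positivity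
  have hqvi0R : (qv i : ℝ) ≠ 0 := by have := hqv i; positivity
  set c : Fin L := ⟨q, hqltL⟩ with hc
  set g : Fin n → Fin L := fun j => if j = i then c else 0 with hg
  obtain ⟨r, hr⟩ := hqiL
  set F : (Fin n → Fin L) → ℂ := fun s =>
    e2pi (((MvPolynomial.eval (fun j => ((s j : ℕ) : ℤ)) P : ℤ) : ℝ) * (a : ℝ) / (q : ℝ)
      + ∑ j, ((s j : ℕ) : ℝ) * ((av j : ℤ) : ℝ) / ((qv j : ℕ) : ℝ)) with hF
  set z : ℂ := e2pi ((q : ℝ) * ((av i : ℤ) : ℝ) / ((qv i : ℕ) : ℝ)) with hzdef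
  have hz1 : z ≠ 1 := by
    intro h
    rw [hzdef, e2pi_eq_one_iff] at h
    obtain ⟨m, hm⟩ := h
    rw [div_eq_iff hqvi0R] at hm
    have hZ : (q : ℤ) * av i = m * (qv i : ℤ) := by exact_mod_cast hm
    have hdvd : ((qv i : ℤ)) ∣ (q : ℤ) * av i := ⟨m, by linarith⟩
    have hcop : Int.gcd ((qv i : ℤ)) (av i) = 1 := by rw [Int.gcd_comm]; exact hav i
    have hcop' : IsCoprime ((qv i : ℤ)) (av i) := Int.isCoprime_iff_gcd_eq_one.mpr hcop
    have : ((qv i : ℤ)) ∣ (q : ℤ) := hcop'.dvd_of_dvd_mul_right hdvd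
    exact hi (Int.natCast_dvd_natCast.mp this)
  have key : ∀ s : Fin n → Fin L, F (s + g) = z * F s := by
    intro s
    have hs'j : ∀ j, j ≠ i → ((s + g) j : ℕ) = (s j : ℕ) := by
      intro j hj
      simp [hg, hj]
    have hs'i : (((s + g) i : ℕ)) = ((s i : ℕ) + q) % L := by
      simp [hg, hc, Fin.add_def]
    set u : Fin n → ℤ := fun j => ((s j : ℕ) : ℤ) with hu
    set u' : Fin n → ℤ := fun j => (((s + g) j : ℕ) : ℤ) with hu'
    have hmod : ∀ j, u' j ≡ u j [ZMOD (q : ℤ)] := by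
      intro j
      by_cases hj : j = i
      · subst hj
        show ((((s + g) j : ℕ) : ℤ)) ≡ _ [ZMOD _]
        rw [hs'i]
        push_cast
        show ((((s j : ℕ) : ℤ) + q) % L) % (q : ℤ) = _
        rw [Int.emod_emod_of_dvd _ (by exact_mod_cast Int.natCast_dvd_natCast.mpr hqL)]
        simpa [hu] using Int.add_mul_emod_self_left (((s j : ℕ) : ℤ)) (q : ℤ) 1
      · show ((((s + g) j : ℕ) : ℤ)) ≡ (((s j : ℕ) : ℤ)) [ZMOD (q : ℤ)]
        rw [hs'j j hj]
    have hEmod := eval_modeq P q u' u hmod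
    obtain ⟨t, ht⟩ := hEmod.dvd
    have hEv : MvPolynomial.eval u' P = MvPolynomial.eval u P - (q : ℤ) * t := by linarith
    set k : ℤ := (u i + q) / L with hk
    have hui' : u' i = u i + (q : ℤ) - (L : ℤ) * k := by
      show ((((s + g) i : ℕ) : ℤ)) = _
      rw [hs'i]
      push_cast
      rw [Int.emod_def]
    have hLr : (L : ℤ) = (qv i : ℤ) * (r : ℤ) := by exact_mod_cast hr
    -- exponent identity
    have hexp :
        ((MvPolynomial.eval u' P : ℤ) : ℝ) * (a : ℝ) / (q : ℝ)
            + ∑ j, ((((s + g) j : ℕ)) : ℝ) * ((av j : ℤ) : ℝ) / ((qv j : ℕ) : ℝ)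
          = ((q : ℝ) * ((av i : ℤ) : ℝ) / ((qv i : ℕ) : ℝ))
            + (((-(t * a) - k * r * av i : ℤ)) : ℝ)
            + (((MvPolynomial.eval u P : ℤ) : ℝ) * (a : ℝ) / (q : ℝ)
              + ∑ j, (((s j : ℕ)) : ℝ) * ((av j : ℤ) : ℝ) / ((qv j : ℕ) : ℝ)) := by
      have hterm1 : ((MvPolynomial.eval u' P : ℤ) : ℝ) * (a : ℝ) / (q : ℝ)
          = ((MvPolynomial.eval u P : ℤ) : ℝ) * (a : ℝ) / (q : ℝ) - (t : ℝ) * (a : ℝ) := by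
        rw [hEv]
        push_cast
        field_simp
      have hterm2 : ∑ j, ((((s + g) j : ℕ)) : ℝ) * ((av j : ℤ) : ℝ) / ((qv j : ℕ) : ℝ)
          = (∑ j, (((s j : ℕ)) : ℝ) * ((av j : ℤ) : ℝ) / ((qv j : ℕ) : ℝ))
            + ((q : ℝ) * ((av i : ℤ) : ℝ) / ((qv i : ℕ) : ℝ)
              - (k : ℝ) * (r : ℝ) * ((av i : ℤ) : ℝ)) := by
        have : ∀ j ∈ Finset.univ, ((((s + g) j : ℕ)) : ℝ) * ((av j : ℤ) : ℝ) / ((qv j : ℕ) : ℝ)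
            = (((s j : ℕ)) : ℝ) * ((av j : ℤ) : ℝ) / ((qv j : ℕ) : ℝ)
              + (if j = i then ((q : ℝ) * ((av i : ℤ) : ℝ) / ((qv i : ℕ) : ℝ)
                - (k : ℝ) * (r : ℝ) * ((av i : ℤ) : ℝ)) else 0) := by
          intro j _
          by_cases hj : j = i
          · subst hj
            rw [if_pos rfl]
            have h1 : ((((s + g) j : ℕ)) : ℝ) = ((u' j : ℤ) : ℝ) := by norm_cast
            have h2 : (((s j : ℕ)) : ℝ) = ((u j : ℤ) : ℝ) := by norm_cast
            rw [h1, h2, hui']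
            have hLrR : (L : ℝ) = (qv j : ℝ) * (r : ℝ) := by exact_mod_cast hLr
            push_cast
            rw [hLrR]
            have : (qv j : ℝ) ≠ 0 := hqvi0R
            field_simp
            ring
          · rw [if_neg hj, add_zero, hs'j j hj]
        rw [Finset.sum_congr rfl this, Finset.sum_add_distrib,
          Finset.sum_ite_eq' Finset.univ i, if_pos (Finset.mem_univ i)]
      rw [hterm1, hterm2]
      push_cast
      ring
    show e2pi _ = z * e2pi _
    have hrw : (fun j => (((s + g) j : ℕ) : ℤ)) = u' := rfl
    have hrw2 : (fun j => ((s j : ℕ) : ℤ)) = u := rfl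
    rw [hrw, hrw2, hexp, e2pi_add, e2pi_add, e2pi_intCast, hzdef]
    ring
  have hsum : ∑ s : Fin n → Fin L, F s = z * ∑ s : Fin n → Fin L, F s := by
    conv_lhs => rw [← Equiv.sum_comp (Equiv.addRight g) F]
    simp only [Equiv.coe_addRight]
    rw [Finset.mul_sum]
    exact Finset.sum_congr rfl fun s _ => key s
  have hS0 : ∑ s : Fin n → Fin L, F s = 0 := by
    have h1 : (1 - z) * (∑ s : Fin n → Fin L, F s) = 0 := by
      rw [sub_mul, one_mul, ← hsum, sub_self]
    rcases mul_eq_zero.mp h1 with h | h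
    · exact absurd (by linear_combination -h : z = 1) hz1
    · exact h
  rw [hS0, mul_zero]
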